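/- Let J be a measurable range function with associated orthogonal projections P_ω : ℓ²(Δ) → J(ω), and let 𝒫 be the orthogonal projection of L²(Ω, ℓ²(Δ)) onto M_J. Then (𝒫Φ)(ω) = P_ω(Φ(ω)) for a.e. ω ∈ Ω and every Φ ∈ L²(Ω, ℓ²(Δ)). -/

import Mathlib

set_option maxHeartbeats 1000000


open MeasureTheory

section HelsonAux

variable {Δ : Type*} [Countable Δ]

local notation "H" => lp (fun _ : Δ => ℂ) 2

/-- `lp.single` is continuous. -/
lemma helson_single_cont [DecidableEq Δ] (δ : Δ) :
    Continuous (fun z : ℂ => lp.single (E := fun _ : Δ => ℂ) 2 δ z) := by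
  have hiso : Isometry (fun z : ℂ => lp.single (E := fun _ : Δ => ℂ) 2 δ z) := by
    intro z w
    have hsub : lp.single (E := fun _ : Δ => ℂ) 2 δ z - lp.single 2 δ w
        = lp.single 2 δ (z - w) := by
      ext j
      by_cases h : j = δ
      · subst h
        simp [lp.single_apply_self]
      · simp [lp.single_apply_ne _ _ _ h]
    rw [edist_dist, edist_dist, dist_eq_norm, dist_eq_norm, hsub]
    congr 1
    have := lp.norm_single (E := fun _ : Δ => ℂ) (p := 2) (by norm_num)
      δ (z - w)
    simpa using this
  exact hiso.continuous

/-- Strong measurability of `ω ↦ P ω a` from weak measurability (a Pettis-type argument,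
using that the index set is countable). -/
lemma helson_sm {Ω : Type*} [MeasurableSpace Ω]
    (P : Ω → H →L[ℂ] H)
    (hPmeas : ∀ a b : H, Measurable (fun ω => (inner ℂ (P ω a) b : ℂ)))
    (a : H) : StronglyMeasurable (fun ω => P ω a) := by
  classical
  haveI : (Filter.atTop : Filter (Finset Δ)).NeBot := Filter.atTop_neBot
  have hcoord : ∀ δ : Δ, Measurable (fun ω => (P ω a : ∀ _ : Δ, ℂ) δ) := by
    intro δ
    have h1 : ∀ ω, (starRingEnd ℂ) (inner ℂ (P ω a) (lp.single 2 δ (1 : ℂ)) : ℂ)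
        = (P ω a : ∀ _ : Δ, ℂ) δ := by
      intro ω
      rw [lp.inner_single_right]
      simp [RCLike.inner_apply]
    have := ((RCLike.continuous_conj (K := ℂ)).measurable).comp
      (hPmeas a (lp.single 2 δ (1 : ℂ)))
    simpa only [Function.comp_def, h1] using this
  refine stronglyMeasurable_of_tendsto (f := fun s : Finset Δ => fun ω =>
      ∑ δ ∈ s, lp.single 2 δ ((P ω a : ∀ _ : Δ, ℂ) δ)) Filter.atTop ?_ ?_
  · intro s
    refine Finset.stronglyMeasurable_fun_sum s fun δ _ => ?_
    exact (helson_single_cont δ).comp_stronglyMeasurable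
      (hcoord δ).stronglyMeasurable
  · rw [tendsto_pi_nhds]
    intro ω
    exact lp.hasSum_single ENNReal.ofNat_ne_top (P ω a)

/-- Norm bound for a fiberwise orthogonal projection. -/
lemma helson_norm_le
    (Jω : Submodule ℂ H) (Q : H →L[ℂ] H)
    (hQ : ∀ x, Q x ∈ Jω ∧ x - Q x ∈ Jωᗮ) (x : H) : ‖Q x‖ ≤ ‖x‖ := by
  obtain ⟨h1, h2⟩ := hQ x
  have horto : (inner ℂ (Q x) (x - Q x) : ℂ) = 0 :=
    Submodule.inner_right_of_mem_orthogonal h1 h2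
  have hx : Q x + (x - Q x) = x := by abel
  have key : (inner ℂ (Q x) x : ℂ) = (‖Q x‖ : ℂ) ^ 2 := by
    have hadd := inner_add_right (𝕜 := ℂ) (Q x) (Q x) (x - Q x)
    rw [hx] at hadd
    rw [hadd, horto, add_zero, inner_self_eq_norm_sq_to_K]
    norm_num
  have hle : ‖(inner ℂ (Q x) x : ℂ)‖ ≤ ‖Q x‖ * ‖x‖ := norm_inner_le_norm _ _
  rw [key] at hle
  have h2' : ‖Q x‖ ^ 2 ≤ ‖Q x‖ * ‖x‖ := by
    calc ‖Q x‖ ^ 2 = ‖((‖Q x‖ : ℂ)) ^ 2‖ := by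
          rw [norm_pow, Complex.norm_real, Real.norm_eq_abs, abs_norm]
      _ ≤ ‖Q x‖ * ‖x‖ := hle
  nlinarith [norm_nonneg (Q x), norm_nonneg x]

end HelsonAux

/-- Helson's lemma: let `J` be a measurable range function on `Ω` with values closed subspaces
of `ℓ²(Δ)`, with associated orthogonal projections `P ω`, and let `Pr` be the orthogonal
projection of `L²(Ω, ℓ²(Δ))` onto `M_J`. Then `(PrΦ)(ω) = P ω (Φ(ω))` for a.e. `ω` and
every `Φ`. -/
theorem orthogonal_projection_onto_MJ_is_fiberwise
    (Ω : Type*) [MeasurableSpace Ω] (μ : Measure Ω) [IsFiniteMeasure μ]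
    (Δ : Type*) [Countable Δ]
    (J : Ω → Submodule ℂ (lp (fun _ : Δ => ℂ) 2))
    (hJ : ∀ ω, IsClosed (J ω : Set (lp (fun _ : Δ => ℂ) 2)))
    -- the fiberwise orthogonal projections onto `J ω`
    (P : Ω → (lp (fun _ : Δ => ℂ) 2) →L[ℂ] (lp (fun _ : Δ => ℂ) 2))
    (hP : ∀ ω x, P ω x ∈ J ω ∧ x - P ω x ∈ (J ω)ᗮ)
    -- measurability of the range function
    (hPmeas : ∀ a b : lp (fun _ : Δ => ℂ) 2,
      Measurable (fun ω => (inner ℂ (P ω a) b : ℂ)))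
    -- `Pr` is the orthogonal projection onto `M_J`
    (Pr : Lp (lp (fun _ : Δ => ℂ) 2) 2 μ →L[ℂ] Lp (lp (fun _ : Δ => ℂ) 2) 2 μ)
    (hPrmem : ∀ Φ, ∀ᵐ ω ∂μ,
      (Pr Φ : Ω → lp (fun _ : Δ => ℂ) 2) ω ∈ J ω)
    (hProrth : ∀ Φ Ψ : Lp (lp (fun _ : Δ => ℂ) 2) 2 μ,
      (∀ᵐ ω ∂μ, (Ψ : Ω → lp (fun _ : Δ => ℂ) 2) ω ∈ J ω) →
        (inner ℂ (Φ - Pr Φ) Ψ : ℂ) = 0) :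
    ∀ Φ : Lp (lp (fun _ : Δ => ℂ) 2) 2 μ, ∀ᵐ ω ∂μ,
      (Pr Φ : Ω → lp (fun _ : Δ => ℂ) 2) ω = P ω ((Φ : Ω → lp (fun _ : Δ => ℂ) 2) ω) := by
  classical
  set H := lp (fun _ : Δ => ℂ) 2 with hHdef
  intro Φ
  set G : Lp H 2 μ := Φ - Pr Φ with hGdef
  have hGm : AEStronglyMeasurable (G : Ω → H) μ := Lp.aestronglyMeasurable G
  have hGint : Integrable (G : Ω → H) μ := (Lp.memLp G).integrable one_le_two
  have hPnorm : ∀ ω x, ‖P ω x‖ ≤ ‖x‖ := fun ω x => helson_norm_le (J ω) (P ω) (hP ω) x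
  -- Step 1: for each `a`, `⟪G ω, P ω a⟫ = 0` a.e.
  have step1 : ∀ a : H, ∀ᵐ ω ∂μ, (inner ℂ ((G : Ω → H) ω) (P ω a) : ℂ) = 0 := by
    intro a
    set h : Ω → ℂ := fun ω => (inner ℂ ((G : Ω → H) ω) (P ω a) : ℂ) with hhdef
    have hSM : StronglyMeasurable (fun ω => P ω a) := helson_sm P hPmeas a
    have hh : AEStronglyMeasurable h μ := hGm.inner hSM.aestronglyMeasurable
    set φ : ℂ → ℂ := fun z => if z = 0 then 0 else (starRingEnd ℂ z) * ((‖z‖ : ℂ))⁻¹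
      with hφdef
    have hφm : Measurable φ := by
      apply Measurable.ite (measurableSet_eq_fun measurable_id measurable_const)
        measurable_const
      exact ((RCLike.continuous_conj (K := ℂ)).measurable).mul
        ((Complex.measurable_ofReal.comp measurable_norm).inv)
    set g : Ω → ℂ := fun ω => φ (h ω) with hgdef
    have hgm : AEMeasurable g μ := hφm.comp_aemeasurable hh.aemeasurable
    have hgbound : ∀ ω, ‖g ω‖ ≤ 1 := by
      intro ω
      by_cases hz : h ω = 0
      · simp [hgdef, hφdef, hz]
      · have hn : ‖h ω‖ ≠ 0 := norm_ne_zero_iff.2 hz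
        simp only [hgdef, hφdef, if_neg hz, norm_mul, RCLike.norm_conj, norm_inv,
          Complex.norm_real, Real.norm_eq_abs, abs_norm]
        rw [mul_inv_cancel₀ hn]
    have hgh : ∀ ω, g ω * h ω = ((‖h ω‖ : ℝ) : ℂ) := by
      intro ω
      by_cases hz : h ω = 0
      · simp [hgdef, hφdef, hz]
      · have hn : (‖h ω‖ : ℝ) ≠ 0 := norm_ne_zero_iff.2 hz
        have hn' : ((‖h ω‖ : ℝ) : ℂ) ≠ 0 := Complex.ofReal_ne_zero.2 hn
        have hrw : g ω * h ω = (h ω * (starRingEnd ℂ) (h ω)) * (((‖h ω‖ : ℝ) : ℂ))⁻¹ := by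
          simp only [hgdef, hφdef, if_neg hz]
          ring
        rw [hrw, Complex.mul_conj, Complex.normSq_eq_norm_sq]
        push_cast
        rw [sq, mul_assoc, mul_inv_cancel₀ hn', mul_one]
    -- the test function
    set Ψf : Ω → H := fun ω => g ω • P ω a with hΨfdef
    have hΨm : AEStronglyMeasurable Ψf μ :=
      (hgm.aestronglyMeasurable).smul hSM.aestronglyMeasurable
    have hΨmem : MemLp Ψf 2 μ := by
      refine MemLp.of_bound hΨm ‖a‖ (Filter.Eventually.of_forall fun ω => ?_)
      calc ‖g ω • P ω a‖ = ‖g ω‖ * ‖P ω a‖ := norm_smul _ _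
        _ ≤ 1 * ‖a‖ := mul_le_mul (hgbound ω) (hPnorm ω a) (norm_nonneg _) zero_le_one
        _ = ‖a‖ := one_mul _
    set Ψ : Lp H 2 μ := hΨmem.toLp Ψf with hΨdef
    have hΨcoe : (Ψ : Ω → H) =ᵐ[μ] Ψf := hΨmem.coeFn_toLp
    have hΨJ : ∀ᵐ ω ∂μ, (Ψ : Ω → H) ω ∈ J ω := by
      filter_upwards [hΨcoe] with ω hω
      rw [hω]
      exact Submodule.smul_mem _ _ (hP ω a).1
    have horth : (inner ℂ G Ψ : ℂ) = 0 := hProrth Φ Ψ hΨJ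
    have hint : ∫ ω, (inner ℂ ((G : Ω → H) ω) ((Ψ : Ω → H) ω) : ℂ) ∂μ = 0 := by
      rw [← MeasureTheory.L2.inner_def]; exact horth
    have hint2 : ∫ ω, ((‖h ω‖ : ℝ) : ℂ) ∂μ = 0 := by
      rw [← hint]
      refine integral_congr_ae ?_
      filter_upwards [hΨcoe] with ω hω
      rw [hω]
      simp only [hΨfdef, inner_smul_right]
      exact (hgh ω).symm
    have hnormint : Integrable (fun ω => ‖h ω‖) μ := by
      refine Integrable.mono' (hGint.norm.mul_const ‖a‖) hh.norm
        (Filter.Eventually.of_forall fun ω => ?_)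
      rw [norm_norm]
      calc ‖h ω‖ ≤ ‖(G : Ω → H) ω‖ * ‖P ω a‖ := norm_inner_le_norm _ _
        _ ≤ ‖(G : Ω → H) ω‖ * ‖a‖ :=
          mul_le_mul_of_nonneg_left (hPnorm ω a) (norm_nonneg _)
    have hre : ∫ ω, ‖h ω‖ ∂μ = 0 := by
      have h2' : Complex.ofRealCLM (∫ ω, ‖h ω‖ ∂μ) = 0 := by
        rw [← ContinuousLinearMap.integral_comp_comm _ hnormint]
        simpa using hint2
      simpa using h2'
    have hzero : (fun ω => ‖h ω‖) =ᵐ[μ] 0 :=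
      (integral_eq_zero_iff_of_nonneg (fun ω => norm_nonneg _) hnormint).1 hre
    filter_upwards [hzero] with ω hω
    have : ‖h ω‖ = 0 := hω
    exact norm_eq_zero.1 this
  -- Step 2: combine the countably many conditions and conclude pointwise
  have hsub : (G : Ω → H) =ᵐ[μ] (Φ : Ω → H) - (Pr Φ : Ω → H) := Lp.coeFn_sub _ _
  filter_upwards [MeasureTheory.ae_all_iff.2
      (fun δ : Δ => step1 (lp.single 2 δ (1 : ℂ))), hPrmem Φ, hsub] with ω h1 h2 h3
  have h3' : (G : Ω → H) ω = (Φ : Ω → H) ω - (Pr Φ : Ω → H) ω := h3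
  -- the continuous linear functional `a ↦ ⟪G ω, P ω a⟫` vanishes on all `lp.single`s,
  -- hence everywhere
  set L : H →L[ℂ] ℂ := (innerSL ℂ ((G : Ω → H) ω)).comp (P ω) with hLdef
  have hL1 : ∀ (δ : Δ) (c : ℂ), L (lp.single 2 δ c) = 0 := by
    intro δ c
    have hc : lp.single (E := fun _ : Δ => ℂ) 2 δ c = c • lp.single 2 δ (1 : ℂ) := by
      rw [← lp.single_smul]
      norm_num
    rw [hc, _root_.map_smul]
    have : L (lp.single 2 δ (1 : ℂ)) = 0 := by
      simpa only [hLdef, ContinuousLinearMap.comp_apply, innerSL_apply_apply] using h1 δ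
    rw [this, smul_zero]
  have hLa : ∀ a : H, L a = 0 := by
    intro a
    have hs : HasSum (fun δ : Δ => lp.single 2 δ ((a : ∀ _ : Δ, ℂ) δ)) a :=
      lp.hasSum_single ENNReal.ofNat_ne_top a
    have hs2 := hs.mapL L
    have he : (fun δ : Δ => L (lp.single 2 δ ((a : ∀ _ : Δ, ℂ) δ))) = fun _ => 0 :=
      funext fun δ => hL1 δ _
    rw [he] at hs2
    exact hs2.unique hasSum_zero
  have hGort : (G : Ω → H) ω ∈ (J ω)ᗮ := by
    rw [Submodule.mem_orthogonal']
    intro u hu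
    have hu2 : u - P ω u = 0 := by
      have hmem : u - P ω u ∈ J ω := Submodule.sub_mem _ hu (hP ω u).1
      exact inner_self_eq_zero.1
        (Submodule.inner_right_of_mem_orthogonal hmem (hP ω u).2)
    have hup : u = P ω u := by rwa [sub_eq_zero] at hu2
    have : L u = 0 := hLa u
    simp only [hLdef, ContinuousLinearMap.comp_apply, innerSL_apply_apply] at this
    rw [← hup] at this
    exact this
  -- uniqueness of the orthogonal decomposition
  have hd : (Pr Φ : Ω → H) ω - P ω ((Φ : Ω → H) ω) = 0 := by
    set d := (Pr Φ : Ω → H) ω - P ω ((Φ : Ω → H) ω) with hddef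
    have hdJ : d ∈ J ω := Submodule.sub_mem _ h2 (hP ω _).1
    have hdO : d ∈ (J ω)ᗮ := by
      have e1 : ((Φ : Ω → H) ω - P ω ((Φ : Ω → H) ω)) ∈ (J ω)ᗮ := (hP ω _).2
      have e2 : ((Φ : Ω → H) ω - (Pr Φ : Ω → H) ω) ∈ (J ω)ᗮ := by
        rw [← h3']
        exact hGort
      have hdecomp : d = ((Φ : Ω → H) ω - P ω ((Φ : Ω → H) ω))
          - ((Φ : Ω → H) ω - (Pr Φ : Ω → H) ω) := by rw [hddef]; abel
      rw [hdecomp]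
      exact Submodule.sub_mem _ e1 e2
    exact inner_self_eq_zero.1 (Submodule.inner_right_of_mem_orthogonal hdJ hdO)
  exact sub_eq_zero.1 hd
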